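/- Equivalence of the full and reduced feedforward equations via an orthonormal range basis: let Q̄ ∈ ℝ^{q×q} be symmetric positive definite, S ∈ ℝ^{n×q}, P̂ ∈ ℝ^{n×n} symmetric positive semidefinite, Ψ̂, â ∈ ℝ^n, and let U₁ ∈ ℝ^{q×r} have orthonormal columns (U₁ᵀU₁ = I_r) whose column space equals the column space of Sᵀ. Define B̂ = SQ̄⁻¹U₁ and Ĝ = U₁ᵀQ̄⁻¹U₁ + B̂ᵀP̂B̂. Then a vector k̂ ∈ ℝ^r satisfies Ĝ k̂ = B̂ᵀ(Ψ̂ − P̂â) if and only if k̄ := Q̄⁻¹U₁k̂ satisfies (Q̄ + SᵀP̂S) k̄ = Sᵀ(Ψ̂ − P̂â). -/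

import Mathlib

open Matrix

/-- Equivalence of the full and reduced feedforward equations via an orthonormal basis
`U₁` of the column space of `Sᵀ`, with `B̂ = SQ̄⁻¹U₁` and `Ĝ = U₁ᵀQ̄⁻¹U₁ + B̂ᵀP̂B̂`. -/
theorem full_reduced_feedforward_equiv
    (n q r : ℕ)
    (Qbar : Matrix (Fin q) (Fin q) ℝ) (hQbar : Qbar.PosDef)
    (S : Matrix (Fin n) (Fin q) ℝ)
    (Ph : Matrix (Fin n) (Fin n) ℝ) (hPh : Ph.PosSemidef)
    (Ψh ah : Fin n → ℝ)
    (U₁ : Matrix (Fin q) (Fin r) ℝ)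
    (hU₁ : U₁ᵀ * U₁ = 1)
    (hrange : Submodule.span ℝ (Set.range U₁ᵀ) = Submodule.span ℝ (Set.range S))
    (Bh : Matrix (Fin n) (Fin r) ℝ) (hBh : Bh = S * Qbar⁻¹ * U₁)
    (Gh : Matrix (Fin r) (Fin r) ℝ) (hGh : Gh = U₁ᵀ * Qbar⁻¹ * U₁ + Bhᵀ * Ph * Bh)
    (kh : Fin r → ℝ) :
    Gh *ᵥ kh = Bhᵀ *ᵥ (Ψh - Ph *ᵥ ah)
      ↔ (Qbar + Sᵀ * Ph * S) *ᵥ (Qbar⁻¹ *ᵥ (U₁ *ᵥ kh)) = Sᵀ *ᵥ (Ψh - Ph *ᵥ ah) := by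
  have hdet : IsUnit Qbar.det := hQbar.det_pos.ne'.isUnit
  have hQQ : Qbar * Qbar⁻¹ = 1 := Matrix.mul_nonsing_inv _ hdet
  have hQQ' : Qbar⁻¹ * Qbar = 1 := Matrix.nonsing_inv_mul _ hdet
  have hQiPD : (Qbar⁻¹).PosDef := hQbar.inv
  have hQis : (Qbar⁻¹)ᵀ = Qbar⁻¹ := by
    have := hQiPD.1
    simpa [Matrix.IsHermitian, Matrix.conjTranspose_eq_transpose_of_trivial] using this
  set w : Fin n → ℝ := Ψh - Ph *ᵥ ah with hw
  have hBt : Bhᵀ = U₁ᵀ * Qbar⁻¹ * Sᵀ := by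
    rw [hBh]
    simp [Matrix.transpose_mul, hQis, Matrix.mul_assoc]
  -- the full-equation left-hand matrix
  have hfullmat : (Qbar + Sᵀ * Ph * S) * Qbar⁻¹ * U₁ = U₁ + Sᵀ * Ph * Bh := by
    rw [hBh, Matrix.add_mul, Matrix.add_mul, hQQ, Matrix.one_mul]
    rw [Matrix.mul_assoc, Matrix.mul_assoc, Matrix.mul_assoc, Matrix.mul_assoc,
      Matrix.mul_assoc]
  have hfull : (Qbar + Sᵀ * Ph * S) *ᵥ (Qbar⁻¹ *ᵥ (U₁ *ᵥ kh))
      = (U₁ + Sᵀ * Ph * Bh) *ᵥ kh := by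
    rw [Matrix.mulVec_mulVec, Matrix.mulVec_mulVec, hfullmat]
  -- reduced matrix as (U₁ᵀ Q⁻¹) times full matrix
  have hGmat : U₁ᵀ * Qbar⁻¹ * (U₁ + Sᵀ * Ph * Bh) = Gh := by
    rw [hGh, hBt, Matrix.mul_add]
    rw [Matrix.mul_assoc (U₁ᵀ * Qbar⁻¹ * Sᵀ), Matrix.mul_assoc, Matrix.mul_assoc,
      Matrix.mul_assoc, Matrix.mul_assoc, Matrix.mul_assoc]
  constructor
  · -- reduced ⇒ full
    intro h
    rw [hfull]
    -- residual x
    set x : Fin q → ℝ := (U₁ + Sᵀ * Ph * Bh) *ᵥ kh - Sᵀ *ᵥ w with hx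
    suffices hx0 : x = 0 by
      have := sub_eq_zero.mp hx0
      exact this
    -- x is in the range of U₁
    have hrangeU : LinearMap.range U₁.mulVecLin = LinearMap.range Sᵀ.mulVecLin := by
      rw [Matrix.range_mulVecLin, Matrix.range_mulVecLin]; exact hrange
    have hxmem : x ∈ LinearMap.range U₁.mulVecLin := by
      have h1 : (U₁ + Sᵀ * Ph * Bh) *ᵥ kh = U₁ *ᵥ kh + Sᵀ *ᵥ ((Ph * Bh) *ᵥ kh) := by
        rw [Matrix.add_mulVec, Matrix.mulVec_mulVec, Matrix.mul_assoc]
      rw [hx, h1]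
      apply Submodule.sub_mem
      · apply Submodule.add_mem
        · exact ⟨kh, rfl⟩
        · rw [hrangeU]; exact ⟨(Ph * Bh) *ᵥ kh, rfl⟩
      · rw [hrangeU]; exact ⟨w, rfl⟩
    obtain ⟨y, hy⟩ := hxmem
    simp only [Matrix.mulVecLin_apply] at hy
    -- reduced equation says U₁ᵀ Q⁻¹ x = 0
    have hred : (U₁ᵀ * Qbar⁻¹) *ᵥ x = 0 := by
      rw [hx, Matrix.mulVec_sub, Matrix.mulVec_mulVec, Matrix.mulVec_mulVec, hGmat,
        ← hBt, h, sub_self]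
    -- substitute x = U₁ y
    have hred' : (U₁ᵀ * Qbar⁻¹ * U₁) *ᵥ y = 0 := by
      rw [← Matrix.mulVec_mulVec, hy]; exact hred
    have hdot : (U₁ *ᵥ y) ⬝ᵥ (Qbar⁻¹ *ᵥ (U₁ *ᵥ y)) = 0 := by
      have h1 : y ⬝ᵥ ((U₁ᵀ * Qbar⁻¹ * U₁) *ᵥ y) = 0 := by rw [hred']; simp
      calc (U₁ *ᵥ y) ⬝ᵥ (Qbar⁻¹ *ᵥ (U₁ *ᵥ y))
          = (y ᵥ* U₁ᵀ) ⬝ᵥ ((Qbar⁻¹ * U₁) *ᵥ y) := by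
            rw [Matrix.vecMul_transpose, Matrix.mulVec_mulVec]
        _ = y ⬝ᵥ (U₁ᵀ *ᵥ ((Qbar⁻¹ * U₁) *ᵥ y)) := (Matrix.dotProduct_mulVec _ _ _).symm
        _ = y ⬝ᵥ ((U₁ᵀ * Qbar⁻¹ * U₁) *ᵥ y) := by
            rw [Matrix.mulVec_mulVec, Matrix.mul_assoc]
        _ = 0 := h1
    have hU₁y : U₁ *ᵥ y = 0 := by
      by_contra hne
      have := hQiPD.dotProduct_mulVec_pos hne
      rw [show star (U₁ *ᵥ y) = U₁ *ᵥ y from rfl] at this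
      rw [hdot] at this
      exact lt_irrefl 0 this
    rw [← hy, hU₁y]
  · -- full ⇒ reduced
    intro h
    rw [hfull] at h
    have := congrArg (fun v => (U₁ᵀ * Qbar⁻¹) *ᵥ v) h
    rw [Matrix.mulVec_mulVec, hGmat, Matrix.mulVec_mulVec, ← hBt] at this
    exact this
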